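/- Every n-vertex graph with at least n+2 edges (an excess-2 graph) contains a cycle of length at most n/2 + 1. -/

import Mathlib

set_option linter.unusedSectionVars false
set_option linter.deprecated false

namespace ExcessTwo

open SimpleGraph Finset
open SimpleGraph.Walk

variable {V : Type} [Fintype V] [DecidableEq V]

/-- Delete a finite set of edges, with decidable adjacency. -/
def Gdel (G : SimpleGraph V) (s : Finset (Sym2 V)) : SimpleGraph V where
  Adj x y := G.Adj x y ∧ s(x, y) ∉ s
  symm := by
    constructor
    intro x y h
    refine ⟨h.1.symm, ?_⟩
    rw [Sym2.eq_swap]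
    exact h.2
  loopless := ⟨fun x h => G.loopless.irrefl x h.1⟩

instance (G : SimpleGraph V) [DecidableRel G.Adj] (s : Finset (Sym2 V)) :
    DecidableRel (Gdel G s).Adj := fun _ _ => instDecidableAnd

lemma Gdel_le (G : SimpleGraph V) (s : Finset (Sym2 V)) : Gdel G s ≤ G := fun _ _ h => h.1

/-- The support of a graph, as a finset. -/
def suppF (G : SimpleGraph V) [DecidableRel G.Adj] : Finset V :=
  Finset.univ.filter (fun z => ∃ y, G.Adj z y)

lemma mem_suppF {G : SimpleGraph V} [DecidableRel G.Adj] {z : V} :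
    z ∈ suppF G ↔ ∃ y, G.Adj z y := by simp [suppF]

lemma suppF_mono {G H : SimpleGraph V} [DecidableRel G.Adj] [DecidableRel H.Adj]
    (h : G ≤ H) : suppF G ⊆ suppF H := by
  intro z hz
  rw [mem_suppF] at hz ⊢
  obtain ⟨y, hy⟩ := hz
  exact ⟨y, h hy⟩

lemma edgeFinset_Gdel (G : SimpleGraph V) [DecidableRel G.Adj] (s : Finset (Sym2 V)) :
    (Gdel G s).edgeFinset = G.edgeFinset \ s := by
  ext e
  induction e with
  | _ x y =>
    rw [mem_edgeFinset, SimpleGraph.mem_edgeSet]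
    simp [Gdel, mem_edgeFinset, SimpleGraph.mem_edgeSet]

lemma mem_edgeSet_of_mem_edgeSet_Gdel {G : SimpleGraph V} {s : Finset (Sym2 V)} {e : Sym2 V}
    (h : e ∈ (Gdel G s).edgeSet) : e ∈ G.edgeSet := by
  induction e with
  | _ x y => exact h.1

/-- Every vertex in the support of a walk is the final endpoint or has a neighbor. -/
lemma support_cases {G : SimpleGraph V} {x y z : V} (p : G.Walk x y) (h : z ∈ p.support) :
    z = y ∨ ∃ w, G.Adj z w := by
  induction p with
  | nil => simp at h; exact Or.inl h
  | cons h' q ih =>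
    rw [Walk.support_cons, List.mem_cons] at h
    rcases h with h | h
    · subst h; exact Or.inr ⟨_, h'⟩
    · exact ih h

lemma not_mem_support_of_isolated {G : SimpleGraph V} {x y z : V}
    (hiso : ∀ w, ¬ G.Adj z w) (p : G.Walk x y) (hy : z ≠ y) : z ∉ p.support := by
  intro h
  rcases support_cases p h with h | ⟨w, hw⟩
  · exact hy h
  · exact hiso w hw

/-- Every vertex on a cycle has a neighbor. -/
lemma cycle_support_adj {G : SimpleGraph V} {u z : V} {p : G.Walk u u}
    (hp : p.IsCycle) (h : z ∈ p.support) : ∃ w, G.Adj z w := by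
  rcases support_cases p h with h | h
  · subst h
    cases p with
    | nil => exact absurd hp IsCycle.not_of_nil
    | cons h' q => exact ⟨_, h'⟩
  · exact h

/-- The length of a cycle is at most the size of any vertex set containing its support. -/
lemma cycle_length_le {G : SimpleGraph V} {u : V} {p : G.Walk u u} (hp : p.IsCycle)
    {S : Finset V} (hS : ∀ z ∈ p.support, z ∈ S) : p.length ≤ S.card := by
  have h1 : p.support.tail.Nodup := hp.2
  have h2 : p.support.tail.length = p.length := by
    have h3 := p.length_support
    have h4 : p.support.tail.length = p.support.length - 1 := List.length_tail
    omega
  rw [← h2]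
  rw [← List.toFinset_card_of_nodup h1]
  apply Finset.card_le_card
  intro z hz
  simp only [List.mem_toFinset] at hz
  exact hS z (List.mem_of_mem_tail hz)


lemma build {G : SimpleGraph V} [DecidableRel G.Adj]
    (hdeg : ∀ z : V, (∃ y, G.Adj z y) → 2 ≤ G.degree z) :
    ∀ (k : ℕ) {x w : V} (p : G.Walk x w), p.IsPath → (∃ y, G.Adj x y) →
      Fintype.card V ≤ p.length + k → ∃ (z : V) (c : G.Walk z z), c.IsCycle := by
  intro k
  induction k with
  | zero =>
    intro x w p hp _ hlen
    have := hp.length_lt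
    omega
  | succ k ih =>
    intro x w p hp hx hlen
    by_cases hext : ∃ y, G.Adj x y ∧ y ∉ p.support
    · obtain ⟨y, hadj, hys⟩ := hext
      refine ih (Walk.cons hadj.symm p) (hp.cons hys) ⟨x, hadj.symm⟩ ?_
      rw [Walk.length_cons]
      omega
    · push_neg at hext
      have h2 : 2 ≤ G.degree x := hdeg x hx
      obtain ⟨y1, hy1, y2, hy2, hne12⟩ := Finset.one_lt_card.mp (by rw [G.card_neighborFinset_eq_degree]; omega : 1 < (G.neighborFinset x).card)
      rw [mem_neighborFinset] at hy1 hy2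
      cases p with
      | nil =>
        exfalso
        have h3 := hext y1 hy1
        have h4 := hext y2 hy2
        simp only [Walk.support_nil, List.mem_singleton] at h3 h4
        subst h3
        exact hne12 h4.symm
      | @cons _ z _ h1 r =>
        -- h1 : G.Adj x z, r : G.Walk z w
        have hzy : ∃ y, G.Adj x y ∧ y ≠ z := by
          by_cases h : y1 = z
          · exact ⟨y2, hy2, by rw [← h]; exact hne12.symm⟩
          · exact ⟨y1, hy1, h⟩
        obtain ⟨y, hy, hyz⟩ := hzy
        have hysup : y ∈ (Walk.cons h1 r).support := hext y hy
        rw [Walk.support_cons, List.mem_cons] at hysup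
        have hyx : y ≠ x := hy.ne'
        have hyr : y ∈ r.support := by
          rcases hysup with h | h
          · exact absurd h hyx
          · exact h
        have hrpath : r.IsPath := hp.of_cons
        have hxr : x ∉ r.support := ((Walk.cons_isPath_iff h1 r).mp hp).2
        set seg := r.takeUntil y hyr with hseg
        have hsegpath : seg.IsPath := hrpath.takeUntil hyr
        have hsegsub : seg.support ⊆ r.support := r.support_takeUntil_subset hyr
        have hxseg : x ∉ seg.support := fun h => hxr (hsegsub h)
        refine ⟨x, Walk.cons h1 (seg.concat hy.symm), ?_⟩
        rw [Walk.cons_isCycle_iff]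
        constructor
        · rw [← Walk.isPath_reverse_iff, Walk.reverse_concat]
          exact (hsegpath.reverse).cons (by rwa [Walk.support_reverse, List.mem_reverse])
        · rw [Walk.edges_concat, List.concat_eq_append, List.mem_append]
          rintro (h | h)
          · exact hxseg (seg.fst_mem_support_of_mem_edges h)
          · simp only [List.mem_singleton, Sym2.eq_iff] at h
            rcases h with ⟨h, -⟩ | ⟨-, h⟩
            · exact hyx h.symm
            · exact hyz h.symm

lemma exists_cycle_of_card :
    ∀ (m : ℕ) (G : SimpleGraph V) (_ : DecidableRel G.Adj), G.edgeFinset.card ≤ m →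
      (suppF G).card ≤ G.edgeFinset.card → 0 < G.edgeFinset.card →
      ∃ (z : V) (c : G.Walk z z), c.IsCycle := by
  intro m
  induction m with
  | zero => intro G _ hm _ hpos; omega
  | succ m ih =>
    intro G instG hm hts hpos
    by_cases hone : ∃ w, (∃ y, G.Adj w y) ∧ G.degree w = 1
    · obtain ⟨w, hwsupp, hw1⟩ := hone
      obtain ⟨u, hu⟩ := Finset.card_eq_one.mp (by rwa [← G.card_neighborFinset_eq_degree] at hw1)
      have hadj : G.Adj w u := by
        rw [← mem_neighborFinset, hu]; exact Finset.mem_singleton_self u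
      have hwu : w ≠ u := hadj.ne
      have hwsu : w ∈ suppF G := mem_suppF.mpr hwsupp
      have husu : u ∈ suppF G := mem_suppF.mpr ⟨w, hadj.symm⟩
      have ht2 : 2 ≤ (suppF G).card := by
        rw [← Finset.card_pair hwu]
        exact Finset.card_le_card (by
          intro z hz
          rcases Finset.mem_insert.mp hz with h | h
          · subst h; exact hwsu
          · rw [Finset.mem_singleton] at h; subst h; exact husu)
      set G1 := Gdel G {s(w, u)} with hG1
      have hE1 : G1.edgeFinset = G.edgeFinset \ {s(w, u)} := edgeFinset_Gdel G _
      have hmem : s(w, u) ∈ G.edgeFinset := by rwa [mem_edgeFinset, SimpleGraph.mem_edgeSet]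
      have hcard1 : G1.edgeFinset.card = G.edgeFinset.card - 1 := by
        rw [hE1, Finset.card_sdiff_of_subset (Finset.singleton_subset_iff.mpr hmem), Finset.card_singleton]
      have hsupp1 : suppF G1 ⊆ suppF G \ {w} := by
        intro z hz
        obtain ⟨y, hy⟩ := mem_suppF.mp hz
        rw [Finset.mem_sdiff, Finset.mem_singleton]
        refine ⟨mem_suppF.mpr ⟨y, hy.1⟩, ?_⟩
        rintro rfl
        have : y ∈ G.neighborFinset z := by rw [mem_neighborFinset]; exact hy.1
        rw [hu, Finset.mem_singleton] at this
        subst this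
        exact hy.2 (Finset.mem_singleton_self _)
      have hsc1 : (suppF G1).card ≤ (suppF G).card - 1 := by
        have := Finset.card_le_card hsupp1
        rwa [Finset.card_sdiff_of_subset (Finset.singleton_subset_iff.mpr hwsu), Finset.card_singleton] at this
      obtain ⟨z, c, hc⟩ := ih G1 inferInstance (by omega) (by omega) (by omega)
      refine ⟨z, c.transfer G (fun e he => mem_edgeSet_of_mem_edgeSet_Gdel (c.edges_subset_edgeSet he)), ?_⟩
      exact hc.transfer _
    · push_neg at hone
      have hdeg : ∀ z : V, (∃ y, G.Adj z y) → 2 ≤ G.degree z := by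
        intro z hz
        have h1 : 0 < G.degree z := by
          rw [← G.card_neighborFinset_eq_degree]
          apply Finset.card_pos.mpr
          obtain ⟨y, hy⟩ := hz
          exact ⟨y, (mem_neighborFinset G z y).mpr hy⟩
        have h2 := hone z hz
        omega
      obtain ⟨e, he⟩ := Finset.card_pos.mp hpos
      induction e with
      | _ x y =>
        rw [mem_edgeFinset, SimpleGraph.mem_edgeSet] at he
        exact build hdeg (Fintype.card V) (Walk.nil : G.Walk x x) Walk.IsPath.nil ⟨y, he⟩ (by simp)


lemma edge_mem_of_ne {G G' : SimpleGraph V} {a b : V}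
    (hedges : ∀ x y : V, G'.Adj x y → s(x, y) ≠ s(a, b) → G.Adj x y) {e : Sym2 V}
    (he : e ∈ G'.edgeSet) (hne : e ≠ s(a, b)) : e ∈ G.edgeSet := by
  induction e with
  | _ x y =>
    rw [SimpleGraph.mem_edgeSet] at he ⊢
    exact hedges x y he hne

lemma pathswap {G G' : SimpleGraph V} {v a b : V}
    (hGa : G.Adj a v) (hGb : G.Adj v b) (hab : a ≠ b)
    (hedges : ∀ x y : V, G'.Adj x y → s(x, y) ≠ s(a, b) → G.Adj x y) :
    ∀ {x y : V} (r : G'.Walk x y), r.IsPath → v ∉ r.support → s(a, b) ∈ r.edges →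
    ∃ q : G.Walk x y, q.IsPath ∧ q.length = r.length + 1 ∧
      (∀ e, e ∈ q.edges ↔ (e ∈ r.edges ∧ e ≠ s(a, b)) ∨ e = s(a, v) ∨ e = s(v, b)) ∧
      (∀ z, z ∈ q.support ↔ z ∈ r.support ∨ z = v) := by
  intro x y r
  induction r with
  | nil => intro _ _ he; simp at he
  | @cons x w y h' r' ih =>
    intro hp hv he
    rw [Walk.support_cons, List.mem_cons] at hv
    push_neg at hv
    obtain ⟨hvx, hvr'⟩ := hv
    have hr'path : r'.IsPath := hp.of_cons
    have hxr' : x ∉ r'.support := ((Walk.cons_isPath_iff h' r').mp hp).2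
    by_cases hfe : s(x, w) = s(a, b)
    · -- first edge is the special edge
      have hnotin : s(a, b) ∉ r'.edges := by
        have hnd := hp.edges_nodup
        rw [Walk.edges_cons] at hnd
        rw [← hfe]
        exact (List.nodup_cons.mp hnd).1
      have htrans : ∀ e ∈ r'.edges, e ∈ G.edgeSet := fun e heq =>
        edge_mem_of_ne hedges (r'.edges_subset_edgeSet heq)
          (fun hh => hnotin (hh ▸ heq))
      have hav : s(a, v) ∉ r'.edges := fun hh => hvr' (r'.snd_mem_support_of_mem_edges hh)
      have hvb : s(v, b) ∉ r'.edges := fun hh => hvr' (r'.fst_mem_support_of_mem_edges hh)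
      rw [Sym2.eq_iff] at hfe
      rcases hfe with ⟨rfl, rfl⟩ | ⟨rfl, rfl⟩
      · -- x = a, w = b
        refine ⟨Walk.cons hGa (Walk.cons hGb (r'.transfer G htrans)), ?_, ?_, ?_, ?_⟩
        · rw [Walk.cons_isPath_iff, Walk.cons_isPath_iff, Walk.support_transfer]
          exact ⟨⟨hr'path.transfer htrans, hvr'⟩, by
            simp only [Walk.support_cons, List.mem_cons, Walk.support_transfer]
            push_neg
            exact ⟨hGa.ne, hxr'⟩⟩
        · simp [Walk.length_transfer]
        · intro e
          simp only [Walk.edges_cons, List.mem_cons, Walk.edges_transfer]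
          constructor
          · rintro (rfl | rfl | h)
            · exact Or.inr (Or.inl rfl)
            · exact Or.inr (Or.inr rfl)
            · exact Or.inl ⟨Or.inr h, fun hh => hnotin (hh ▸ h)⟩
          · rintro (⟨(rfl | h), hne⟩ | rfl | rfl)
            · exact absurd rfl hne
            · exact Or.inr (Or.inr h)
            · exact Or.inl rfl
            · exact Or.inr (Or.inl rfl)
        · intro z
          simp only [Walk.support_cons, List.mem_cons, Walk.support_transfer]
          tauto
      · -- x = b, w = a
        refine ⟨Walk.cons hGb.symm (Walk.cons hGa.symm (r'.transfer G htrans)), ?_, ?_, ?_, ?_⟩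
        · rw [Walk.cons_isPath_iff, Walk.cons_isPath_iff, Walk.support_transfer]
          exact ⟨⟨hr'path.transfer htrans, hvr'⟩, by
            simp only [Walk.support_cons, List.mem_cons, Walk.support_transfer]
            push_neg
            exact ⟨hGb.ne', hxr'⟩⟩
        · simp [Walk.length_transfer]
        · intro e
          simp only [Walk.edges_cons, List.mem_cons, Walk.edges_transfer]
          have e1 : s(x, v) = s(v, x) := Sym2.eq_swap
          have e2 : s(v, w) = s(w, v) := Sym2.eq_swap
          rw [e1, e2]
          constructor
          · rintro (rfl | rfl | h)
            · exact Or.inr (Or.inr rfl)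
            · exact Or.inr (Or.inl rfl)
            · exact Or.inl ⟨Or.inr h, fun hh => hnotin (hh ▸ h)⟩
          · rintro (⟨(rfl | h), hne⟩ | rfl | rfl)
            · exact absurd (Sym2.eq_swap) hne
            · exact Or.inr (Or.inr h)
            · exact Or.inr (Or.inl rfl)
            · exact Or.inl rfl
        · intro z
          simp only [Walk.support_cons, List.mem_cons, Walk.support_transfer]
          tauto
    · -- special edge inside the tail
      have he' : s(a, b) ∈ r'.edges := by
        rw [Walk.edges_cons, List.mem_cons] at he
        rcases he with h | h
        · exact absurd h.symm hfe
        · exact h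
      obtain ⟨q', hq'path, hq'len, hq'edges, hq'supp⟩ := ih hr'path hvr' he'
      have hxw : G.Adj x w := hedges x w h' hfe
      refine ⟨Walk.cons hxw q', ?_, ?_, ?_, ?_⟩
      · rw [Walk.cons_isPath_iff]
        refine ⟨hq'path, ?_⟩
        rw [hq'supp]
        rintro (h | h)
        · exact hxr' h
        · exact hvx h.symm
      · rw [Walk.length_cons, Walk.length_cons]; omega
      · intro e
        rw [Walk.edges_cons, List.mem_cons, hq'edges, Walk.edges_cons]
        constructor
        · rintro (rfl | h)
          · exact Or.inl ⟨List.mem_cons_self, hfe⟩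
          · rcases h with ⟨h1, h2⟩ | h | h
            · exact Or.inl ⟨List.mem_cons_of_mem _ h1, h2⟩
            · exact Or.inr (Or.inl h)
            · exact Or.inr (Or.inr h)
        · rintro (⟨h1, h2⟩ | h | h)
          · rcases List.mem_cons.mp h1 with rfl | h1
            · exact Or.inl rfl
            · exact Or.inr (Or.inl ⟨h1, h2⟩)
          · exact Or.inr (Or.inr (Or.inl h))
          · exact Or.inr (Or.inr (Or.inr h))
      · intro z
        rw [Walk.support_cons, List.mem_cons, hq'supp, Walk.support_cons, List.mem_cons]
        tauto

lemma cycswap {G G' : SimpleGraph V} {v a b : V}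
    (hGa : G.Adj a v) (hGb : G.Adj v b) (hab : a ≠ b)
    (hedges : ∀ x y : V, G'.Adj x y → s(x, y) ≠ s(a, b) → G.Adj x y)
    (hiso : ∀ w, ¬ G'.Adj v w) {u : V} (p : G'.Walk u u) (hp : p.IsCycle)
    (he : s(a, b) ∈ p.edges) :
    ∃ q : G.Walk a a, q.IsCycle ∧ q.length = p.length + 1 ∧
      (∀ e, e ∈ q.edges ↔ (e ∈ p.edges ∧ e ≠ s(a, b)) ∨ e = s(a, v) ∨ e = s(v, b)) := by
  have ha : a ∈ p.support := p.fst_mem_support_of_mem_edges he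
  set p1 := p.rotate a ha with hp1def
  have hp1 : p1.IsCycle := hp.rotate ha
  have hmem1 : ∀ e : Sym2 V, e ∈ p1.edges ↔ e ∈ p.edges := fun e =>
    (p.rotate_edges a ha).perm.mem_iff
  have hlen1 : p1.length = p.length := by
    have h := (p.rotate_edges a ha).perm.length_eq
    rwa [Walk.length_edges, Walk.length_edges] at h
  have he1 : s(a, b) ∈ p1.edges := (hmem1 _).mpr he
  clear_value p1
  cases p1 with
  | nil => exact absurd hp1 IsCycle.not_of_nil
  | @cons _ w _ h1 r =>
    have hcyc := (Walk.cons_isCycle_iff r h1).mp hp1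
    have hvr : v ∉ r.support :=
      not_mem_support_of_isolated hiso r hGa.ne'
    have havr : s(a, v) ∉ r.edges := fun hh => hvr (r.snd_mem_support_of_mem_edges hh)
    have hvbr : s(v, b) ∉ r.edges := fun hh => hvr (r.fst_mem_support_of_mem_edges hh)
    rw [Walk.edges_cons] at he1 hmem1
    rw [Walk.length_cons] at hlen1
    by_cases hfirst : s(a, b) = s(a, w)
    · have hwb : w = b := by
        rw [Sym2.eq_iff] at hfirst
        rcases hfirst with ⟨-, h⟩ | ⟨h1', h2'⟩
        · exact h.symm
        · exact absurd h2'.symm hab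
      subst hwb
      have hnotin := hcyc.2
      have htrans : ∀ e ∈ r.edges, e ∈ G.edgeSet := fun e heq =>
        edge_mem_of_ne hedges (r.edges_subset_edgeSet heq) (fun hh => hnotin (hh ▸ heq))
      refine ⟨Walk.cons hGa (Walk.cons hGb (r.transfer G htrans)), ?_, ?_, ?_⟩
      · rw [Walk.cons_isCycle_iff]
        constructor
        · rw [Walk.cons_isPath_iff, Walk.support_transfer]
          exact ⟨hcyc.1.transfer htrans, hvr⟩
        · rw [Walk.edges_cons, List.mem_cons, Walk.edges_transfer]
          rintro (h | h)
          · rw [Sym2.eq_iff] at h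
            rcases h with ⟨h, -⟩ | ⟨h, -⟩
            · exact hGa.ne h
            · exact hab h
          · exact havr h
      · simp only [Walk.length_cons, Walk.length_transfer]
        omega
      · intro e
        simp only [Walk.edges_cons, List.mem_cons, Walk.edges_transfer, ← hmem1 e,
          List.mem_cons]
        constructor
        · rintro (rfl | rfl | h)
          · exact Or.inr (Or.inl rfl)
          · exact Or.inr (Or.inr rfl)
          · exact Or.inl ⟨Or.inr h, fun hh => hnotin (hh ▸ h)⟩
        · rintro (⟨(h | h), hne⟩ | rfl | rfl)
          · exact absurd h hne
          · exact Or.inr (Or.inr h)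
          · exact Or.inl rfl
          · exact Or.inr (Or.inl rfl)
    · have he1r : s(a, b) ∈ r.edges := by
        rcases List.mem_cons.mp he1 with h | h
        · exact absurd h hfirst
        · exact h
      have haw : G.Adj a w := hedges a w h1 (fun hh => hfirst hh.symm)
      obtain ⟨q', hq'path, hq'len, hq'edges, hq'supp⟩ :=
        pathswap hGa hGb hab hedges r hcyc.1 hvr he1r
      refine ⟨Walk.cons haw q', ?_, ?_, ?_⟩
      · rw [Walk.cons_isCycle_iff]
        refine ⟨hq'path, ?_⟩
        rw [hq'edges]
        rintro (⟨h, -⟩ | h | h)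
        · exact hcyc.2 h
        · rw [Sym2.eq_iff] at h
          rcases h with ⟨-, h⟩ | ⟨h, -⟩
          · subst h
            exact hiso a h1.symm
          · exact hGa.ne h
        · rw [Sym2.eq_iff] at h
          rcases h with ⟨h, -⟩ | ⟨h, -⟩
          · exact hGa.ne h
          · exact hab h
      · rw [Walk.length_cons, hq'len]
        omega
      · intro e
        rw [Walk.edges_cons, List.mem_cons, hq'edges, ← hmem1 e, List.mem_cons]
        constructor
        · rintro (rfl | h)
          · exact Or.inl ⟨Or.inl rfl, fun hh => hfirst hh.symm⟩
          · rcases h with ⟨h1', h2'⟩ | h | h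
            · exact Or.inl ⟨Or.inr h1', h2'⟩
            · exact Or.inr (Or.inl h)
            · exact Or.inr (Or.inr h)
        · rintro (⟨(rfl | h), hne⟩ | h | h)
          · exact Or.inl rfl
          · exact Or.inr (Or.inl ⟨h, hne⟩)
          · exact Or.inr (Or.inr (Or.inl h))
          · exact Or.inr (Or.inr (Or.inr h))


/-- Suppression graph: delete the two edges at `v` and add edge `ab`. -/
def Gsw (G : SimpleGraph V) (v a b : V) : SimpleGraph V where
  Adj x y := (G.Adj x y ∧ s(x, y) ≠ s(v, a) ∧ s(x, y) ≠ s(v, b)) ∨ (x ≠ y ∧ s(x, y) = s(a, b))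
  symm := by
    constructor
    intro x y h
    have hsw : s(y, x) = s(x, y) := Sym2.eq_swap
    rcases h with ⟨h1, h2, h3⟩ | ⟨h1, h2⟩
    · exact Or.inl ⟨h1.symm, by rwa [hsw], by rwa [hsw]⟩
    · exact Or.inr ⟨h1.symm, by rwa [hsw]⟩
  loopless := by
    constructor
    intro x h
    rcases h with ⟨h1, -⟩ | ⟨h1, -⟩
    · exact G.loopless.irrefl x h1
    · exact h1 rfl

instance (G : SimpleGraph V) [DecidableRel G.Adj] (v a b : V) :
    DecidableRel (Gsw G v a b).Adj := fun x y => by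
  change Decidable ((G.Adj x y ∧ s(x, y) ≠ s(v, a) ∧ s(x, y) ≠ s(v, b)) ∨ (x ≠ y ∧ s(x, y) = s(a, b)))
  infer_instance

lemma Gsw_adj {G : SimpleGraph V} {v a b x y : V} :
    (Gsw G v a b).Adj x y ↔
      (G.Adj x y ∧ s(x, y) ≠ s(v, a) ∧ s(x, y) ≠ s(v, b)) ∨ (x ≠ y ∧ s(x, y) = s(a, b)) :=
  Iff.rfl

section GswFacts

variable {G : SimpleGraph V} [DecidableRel G.Adj] {v a b : V}
  (hva : G.Adj v a) (hvb : G.Adj v b) (hab : a ≠ b)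

include hva hvb hab

lemma edgeFinset_Gsw :
    (Gsw G v a b).edgeFinset = (G.edgeFinset \ {s(v, a), s(v, b)}) ∪ {s(a, b)} := by
  ext e
  induction e with
  | _ x y =>
    simp only [mem_edgeFinset, Finset.mem_union, Finset.mem_sdiff, Finset.mem_insert,
      Finset.mem_singleton, SimpleGraph.mem_edgeSet]
    rw [Gsw_adj]
    constructor
    · rintro (⟨h1, h2, h3⟩ | ⟨h1, h2⟩)
      · exact Or.inl ⟨h1, by tauto⟩
      · exact Or.inr h2
    · rintro (⟨h1, h2⟩ | h)
      · exact Or.inl ⟨h1, by tauto⟩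
      · refine Or.inr ⟨?_, h⟩
        intro heq
        subst heq
        rw [Sym2.eq_iff] at h
        rcases h with ⟨h1, h2⟩ | ⟨h1, h2⟩
        · exact hab (h1 ▸ h2.symm ▸ rfl)
        · exact hab (h2 ▸ h1.symm ▸ rfl)

lemma hVAB_distinct : s(v, a) ≠ s(v, b) ∧ s(v, a) ≠ s(a, b) ∧ s(v, b) ≠ s(a, b) := by
  refine ⟨?_, ?_, ?_⟩ <;> intro h <;> rw [Sym2.eq_iff] at h
  · rcases h with ⟨-, h⟩ | ⟨h, -⟩
    · exact hab h
    · exact hvb.ne h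
  · rcases h with ⟨h, -⟩ | ⟨h, -⟩
    · exact hva.ne h
    · exact hvb.ne h
  · rcases h with ⟨h, -⟩ | ⟨h, -⟩
    · exact hva.ne h
    · exact hvb.ne h

lemma card_edgeFinset_Gsw (hnadj : ¬ G.Adj a b) :
    (Gsw G v a b).edgeFinset.card = G.edgeFinset.card - 1 := by
  obtain ⟨d1, d2, d3⟩ := hVAB_distinct hva hvb hab
  have hpair : ({s(v, a), s(v, b)} : Finset (Sym2 V)) ⊆ G.edgeFinset := by
    intro e he
    rcases Finset.mem_insert.mp he with rfl | he
    · rwa [mem_edgeFinset, SimpleGraph.mem_edgeSet]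
    · rw [Finset.mem_singleton] at he
      subst he
      rwa [mem_edgeFinset, SimpleGraph.mem_edgeSet]
  have hcardpair : ({s(v, a), s(v, b)} : Finset (Sym2 V)).card = 2 := Finset.card_pair d1
  have habnot : s(a, b) ∉ G.edgeFinset \ {s(v, a), s(v, b)} := by
    intro h
    rw [Finset.mem_sdiff, mem_edgeFinset, SimpleGraph.mem_edgeSet] at h
    exact hnadj h.1
  rw [edgeFinset_Gsw hva hvb hab, Finset.card_union_of_disjoint (by
      rw [Finset.disjoint_singleton_right]; exact habnot),
    Finset.card_sdiff_of_subset hpair, hcardpair, Finset.card_singleton]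
  have h2 : 2 ≤ G.edgeFinset.card := by
    calc 2 = ({s(v, a), s(v, b)} : Finset (Sym2 V)).card := hcardpair.symm
    _ ≤ _ := Finset.card_le_card hpair
  omega

lemma Gsw_isolated (hnbr : G.neighborFinset v = {a, b}) :
    ∀ w, ¬ (Gsw G v a b).Adj v w := by
  intro w h
  rcases h with ⟨h1, h2, h3⟩ | ⟨-, h⟩
  · have : w ∈ G.neighborFinset v := (mem_neighborFinset G v w).mpr h1
    rw [hnbr] at this
    rcases Finset.mem_insert.mp this with rfl | hw
    · exact h2 rfl
    · rw [Finset.mem_singleton] at hw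
      subst hw
      exact h3 rfl
  · rw [Sym2.eq_iff] at h
    rcases h with ⟨h, -⟩ | ⟨h, -⟩
    · exact hva.ne h
    · exact hvb.ne h

lemma suppF_Gsw (hnbr : G.neighborFinset v = {a, b}) :
    suppF (Gsw G v a b) ⊆ suppF G \ {v} := by
  intro z hz
  obtain ⟨y, hy⟩ := mem_suppF.mp hz
  rw [Finset.mem_sdiff, Finset.mem_singleton]
  constructor
  · rcases hy with ⟨h1, -⟩ | ⟨-, h⟩
    · exact mem_suppF.mpr ⟨y, h1⟩
    · rw [Sym2.eq_iff] at h
      rcases h with ⟨rfl, -⟩ | ⟨rfl, -⟩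
      · exact mem_suppF.mpr ⟨v, hva.symm⟩
      · exact mem_suppF.mpr ⟨v, hvb.symm⟩
  · rintro rfl
    exact Gsw_isolated hva hvb hab hnbr y hy

lemma Gsw_edge_to_G : ∀ x y : V, (Gsw G v a b).Adj x y → s(x, y) ≠ s(a, b) → G.Adj x y := by
  intro x y h hne
  rcases h with ⟨h1, -⟩ | ⟨-, h⟩
  · exact h1
  · exact absurd h hne

end GswFacts

/-- Edge-usage count of a closed walk. -/
def cnt (e : Sym2 V) {G : SimpleGraph V} {x y : V} (p : G.Walk x y) : ℕ :=
  if e ∈ p.edges then 1 else 0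

lemma cnt_le_one {e : Sym2 V} {G : SimpleGraph V} {x y : V} (p : G.Walk x y) : cnt e p ≤ 1 := by
  unfold cnt; split_ifs <;> omega

lemma cnt_mono {e : Sym2 V} {G H : SimpleGraph V} {x y x' y' : V} {p : G.Walk x y}
    {q : H.Walk x' y'} (h : e ∈ p.edges → e ∈ q.edges) : cnt e p ≤ cnt e q := by
  unfold cnt
  split_ifs with h1 h2
  · omega
  · exact absurd (h h1) h2
  · omega
  · omega

lemma cnt_mono2 {e f : Sym2 V} {G H : SimpleGraph V} {x y x' y' : V} {p : G.Walk x y}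
    {q : H.Walk x' y'} (h : e ∈ p.edges → f ∈ q.edges) : cnt e p ≤ cnt f q := by
  unfold cnt
  split_ifs with h1 h2
  · omega
  · exact absurd (h h1) h2
  · omega
  · omega

lemma not_mem_of_mem_edgeSet_Gdel {G : SimpleGraph V} {s : Finset (Sym2 V)} {e : Sym2 V}
    (h : e ∈ (Gdel G s).edgeSet) : e ∉ s := by
  induction e with
  | _ x y => exact h.2

lemma cnt_transfer {e : Sym2 V} {G H : SimpleGraph V} {x y : V} (p : G.Walk x y)
    (hp : ∀ e ∈ p.edges, e ∈ H.edgeSet) : cnt e (p.transfer H hp) = cnt e p := by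
  unfold cnt
  rw [Walk.edges_transfer]

/-- The statement that `G` has four cycles, each edge on at most two of them,
with total length at most `c`. -/
def QQ (G : SimpleGraph V) (c : ℕ) : Prop :=
  ∃ (w1 w2 w3 w4 : V) (p1 : G.Walk w1 w1) (p2 : G.Walk w2 w2) (p3 : G.Walk w3 w3)
    (p4 : G.Walk w4 w4),
    p1.IsCycle ∧ p2.IsCycle ∧ p3.IsCycle ∧ p4.IsCycle ∧
    (∀ e : Sym2 V, cnt e p1 + cnt e p2 + cnt e p3 + cnt e p4 ≤ 2) ∧
    p1.length + p2.length + p3.length + p4.length ≤ c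

lemma QQ_mono {G : SimpleGraph V} {c c' : ℕ} (h : c ≤ c') (hq : QQ G c) : QQ G c' := by
  obtain ⟨w1, w2, w3, w4, p1, p2, p3, p4, h1, h2, h3, h4, hcnt, hlen⟩ := hq
  exact ⟨w1, w2, w3, w4, p1, p2, p3, p4, h1, h2, h3, h4, hcnt, le_trans hlen h⟩

lemma QQ_of_le {G H : SimpleGraph V} (hle : H ≤ G) {c : ℕ} (hq : QQ H c) : QQ G c := by
  obtain ⟨w1, w2, w3, w4, p1, p2, p3, p4, h1, h2, h3, h4, hcnt, hlen⟩ := hq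
  have htr : ∀ {w : V} (p : H.Walk w w), ∀ e ∈ p.edges, e ∈ G.edgeSet := fun p e he =>
    (SimpleGraph.edgeSet_mono hle) (p.edges_subset_edgeSet he)
  refine ⟨w1, w2, w3, w4, p1.transfer G (htr p1), p2.transfer G (htr p2),
    p3.transfer G (htr p3), p4.transfer G (htr p4),
    h1.transfer _, h2.transfer _, h3.transfer _, h4.transfer _, ?_, ?_⟩
  · intro e
    rw [cnt_transfer, cnt_transfer, cnt_transfer, cnt_transfer]
    exact hcnt e
  · rw [Walk.length_transfer, Walk.length_transfer, Walk.length_transfer, Walk.length_transfer]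
    exact hlen

/-- A triangle is a cycle. -/
lemma triangle_isCycle {G : SimpleGraph V} {x y z : V} (hxy : G.Adj x y) (hyz : G.Adj y z)
    (hzx : G.Adj z x) :
    (Walk.cons hxy (Walk.cons hyz (Walk.cons hzx Walk.nil)) : G.Walk x x).IsCycle := by
  rw [Walk.cons_isCycle_iff]
  constructor
  · rw [Walk.cons_isPath_iff, Walk.cons_isPath_iff]
    refine ⟨⟨Walk.IsPath.nil, ?_⟩, ?_⟩
    · simp [hzx.ne]
    · simp only [Walk.support_cons, Walk.support_nil, List.mem_cons, List.mem_singleton]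
      push_neg
      exact ⟨hyz.ne, hxy.ne', List.not_mem_nil⟩
  · simp only [Walk.edges_cons, Walk.edges_nil, List.mem_cons, List.not_mem_nil, or_false]
    rintro (h | h) <;> rw [Sym2.eq_iff] at h
    · rcases h with ⟨h1, -⟩ | ⟨h1, -⟩
      · exact hxy.ne h1
      · exact hzx.ne' h1
    · rcases h with ⟨h1, -⟩ | ⟨-, h1⟩
      · exact hzx.ne' h1
      · exact hyz.ne h1

lemma triangle_edges {G : SimpleGraph V} {x y z : V} (hxy : G.Adj x y) (hyz : G.Adj y z)
    (hzx : G.Adj z x) :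
    (Walk.cons hxy (Walk.cons hyz (Walk.cons hzx Walk.nil)) : G.Walk x x).edges
      = [s(x, y), s(y, z), s(z, x)] := rfl

/-- Lift one cycle from the suppression graph back to `G`. -/
lemma lift_one {G G' : SimpleGraph V} {v a b : V}
    (hGa : G.Adj a v) (hGb : G.Adj v b) (hab : a ≠ b)
    (hedges : ∀ x y : V, G'.Adj x y → s(x, y) ≠ s(a, b) → G.Adj x y)
    (hiso : ∀ w, ¬ G'.Adj v w) {u : V} (p : G'.Walk u u) (hp : p.IsCycle) :
    ∃ (z : V) (q : G.Walk z z), q.IsCycle ∧ q.length = p.length + cnt s(a, b) p ∧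
      (∀ e, e ∈ q.edges ↔ (e ∈ p.edges ∧ e ≠ s(a, b)) ∨
        ((e = s(a, v) ∨ e = s(v, b)) ∧ s(a, b) ∈ p.edges)) := by
  by_cases hmem : s(a, b) ∈ p.edges
  · obtain ⟨q, hq1, hq2, hq3⟩ := cycswap hGa hGb hab hedges hiso p hp hmem
    refine ⟨a, q, hq1, ?_, ?_⟩
    · rw [hq2]
      unfold cnt
      rw [if_pos hmem]
    · intro e
      rw [hq3 e]
      tauto
  · have htrans : ∀ e ∈ p.edges, e ∈ G.edgeSet := fun e he =>
      edge_mem_of_ne hedges (p.edges_subset_edgeSet he) (fun hh => hmem (hh ▸ he))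
    refine ⟨u, p.transfer G htrans, hp.transfer _, ?_, ?_⟩
    · rw [Walk.length_transfer]
      unfold cnt
      rw [if_neg hmem]
      omega
    · intro e
      rw [Walk.edges_transfer]
      constructor
      · intro h
        exact Or.inl ⟨h, fun hh => hmem (hh ▸ h)⟩
      · rintro (⟨h, -⟩ | ⟨-, h⟩)
        · exact h
        · exact absurd h hmem


lemma ite_sum_le_two (P1 P2 P3 P4 : Prop) [Decidable P1] [Decidable P2] [Decidable P3]
    [Decidable P4] (h1 : ¬(P1 ∧ P2 ∧ P3)) (h2 : ¬(P1 ∧ P2 ∧ P4)) (h3 : ¬(P1 ∧ P3 ∧ P4))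
    (h4 : ¬(P2 ∧ P3 ∧ P4)) :
    (if P1 then 1 else 0) + (if P2 then 1 else 0) + (if P3 then 1 else 0)
      + (if P4 then 1 else 0) ≤ 2 := by
  split_ifs <;> first | omega | (exfalso; tauto)

lemma four_triangles_cnt {w x y z : V} (nwx : w ≠ x) (nwy : w ≠ y) (nwz : w ≠ z)
    (nxy : x ≠ y) (nxz : x ≠ z) (nyz : y ≠ z) (e : Sym2 V) :
    (if e ∈ [s(w, x), s(x, y), s(y, w)] then 1 else 0)
    + (if e ∈ [s(w, x), s(x, z), s(z, w)] then 1 else 0)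
    + (if e ∈ [s(w, y), s(y, z), s(z, w)] then 1 else 0)
    + (if e ∈ [s(x, y), s(y, z), s(z, x)] then 1 else 0) ≤ 2 := by
  apply ite_sum_le_two <;>
  · rintro ⟨ha, hb, hc⟩
    simp only [List.mem_cons, List.not_mem_nil, or_false] at ha hb hc
    rcases ha with rfl | rfl | rfl <;> simp only [Sym2.eq_iff] at hb hc <;> tauto

lemma base_K4 {G : SimpleGraph V} [DecidableRel G.Adj]
    (hE : G.edgeFinset.card = (suppF G).card + 2)
    (hdeg : ∀ z ∈ suppF G, 3 ≤ G.degree z) :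
    QQ G (2 * ((suppF G).card + 2)) := by
  set t := (suppF G).card with ht
  have hzero : ∀ z ∈ Finset.univ, z ∉ suppF G → G.degree z = 0 := by
    intro z _ hz
    rw [← card_neighborFinset_eq_degree, Finset.card_eq_zero]
    ext y
    simp only [mem_neighborFinset, Finset.notMem_empty, iff_false]
    intro h
    exact hz (mem_suppF.mpr ⟨y, h⟩)
  have hsum : ∑ z ∈ suppF G, G.degree z = 2 * G.edgeFinset.card := by
    rw [← G.sum_degrees_eq_twice_card_edges]
    exact Finset.sum_subset (Finset.subset_univ _) hzero
  have hge : 3 * t ≤ ∑ z ∈ suppF G, G.degree z := by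
    calc 3 * t = ∑ _z ∈ suppF G, 3 := by rw [Finset.sum_const, smul_eq_mul]; ring
    _ ≤ _ := Finset.sum_le_sum hdeg
  have ht4 : t ≤ 4 := by omega
  have hpos : 0 < G.edgeFinset.card := by omega
  have hw : ∃ w, w ∈ suppF G := by
    obtain ⟨e, he⟩ := Finset.card_pos.mp hpos
    induction e with
    | _ x y =>
      rw [mem_edgeFinset, SimpleGraph.mem_edgeSet] at he
      exact ⟨x, mem_suppF.mpr ⟨y, he⟩⟩
  obtain ⟨w, hwsupp⟩ := hw
  have hsub : ∀ u ∈ suppF G, G.neighborFinset u ⊆ (suppF G).erase u := by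
    intro u _ z hz
    rw [mem_neighborFinset] at hz
    rw [Finset.mem_erase]
    exact ⟨hz.ne', mem_suppF.mpr ⟨u, hz.symm⟩⟩
  have ht4' : 4 ≤ t := by
    have h1 := Finset.card_le_card (hsub w hwsupp)
    rw [Finset.card_erase_of_mem hwsupp, card_neighborFinset_eq_degree] at h1
    have := hdeg w hwsupp
    omega
  have hnbr : ∀ u ∈ suppF G, G.neighborFinset u = (suppF G).erase u := by
    intro u hu
    apply Finset.eq_of_subset_of_card_le (hsub u hu)
    rw [Finset.card_erase_of_mem hu, card_neighborFinset_eq_degree]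
    have := hdeg u hu
    omega
  have hadjall : ∀ u1 ∈ suppF G, ∀ u2 ∈ suppF G, u1 ≠ u2 → G.Adj u1 u2 := by
    intro u1 h1 u2 h2 hne
    have h3 : u2 ∈ G.neighborFinset u1 := by
      rw [hnbr u1 h1, Finset.mem_erase]
      exact ⟨hne.symm, h2⟩
    rwa [mem_neighborFinset] at h3
  have h3card : (G.neighborFinset w).card = 3 := by
    rw [hnbr w hwsupp, Finset.card_erase_of_mem hwsupp]
    omega
  obtain ⟨x, y, z, nxy, nxz, nyz, hset⟩ := Finset.card_eq_three.mp h3card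
  have hx : G.Adj w x := by
    rw [← mem_neighborFinset, hset]; simp
  have hy : G.Adj w y := by
    rw [← mem_neighborFinset, hset]; simp
  have hz : G.Adj w z := by
    rw [← mem_neighborFinset, hset]; simp
  have hxs : x ∈ suppF G := mem_suppF.mpr ⟨w, hx.symm⟩
  have hys : y ∈ suppF G := mem_suppF.mpr ⟨w, hy.symm⟩
  have hzs : z ∈ suppF G := mem_suppF.mpr ⟨w, hz.symm⟩
  have haxy : G.Adj x y := hadjall x hxs y hys nxy
  have haxz : G.Adj x z := hadjall x hxs z hzs nxz
  have hayz : G.Adj y z := hadjall y hys z hzs nyz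
  have nwx : w ≠ x := hx.ne
  have nxw : x ≠ w := hx.ne'
  have nwy : w ≠ y := hy.ne
  have nyw : y ≠ w := hy.ne'
  have nwz : w ≠ z := hz.ne
  have nzw : z ≠ w := hz.ne'
  have nyx : y ≠ x := nxy.symm
  have nzx : z ≠ x := nxz.symm
  have nzy : z ≠ y := nyz.symm
  refine ⟨w, w, w, x,
    Walk.cons hx (Walk.cons haxy (Walk.cons hy.symm Walk.nil)),
    Walk.cons hx (Walk.cons haxz (Walk.cons hz.symm Walk.nil)),
    Walk.cons hy (Walk.cons hayz (Walk.cons hz.symm Walk.nil)),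
    Walk.cons haxy (Walk.cons hayz (Walk.cons haxz.symm Walk.nil)),
    triangle_isCycle hx haxy hy.symm,
    triangle_isCycle hx haxz hz.symm,
    triangle_isCycle hy hayz hz.symm,
    triangle_isCycle haxy hayz haxz.symm, ?_, ?_⟩
  · intro e
    have e1 := triangle_edges hx haxy hy.symm
    have e2 := triangle_edges hx haxz hz.symm
    have e3 := triangle_edges hy hayz hz.symm
    have e4 := triangle_edges haxy hayz haxz.symm
    unfold cnt
    rw [e1, e2, e3, e4]
    exact four_triangles_cnt nwx nwy nwz nxy nxz nyz e
  · simp only [Walk.length_cons, Walk.length_nil]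
    omega


theorem key : ∀ (m : ℕ) (G : SimpleGraph V) (_ : DecidableRel G.Adj),
    G.edgeFinset.card ≤ m → (suppF G).card + 2 ≤ G.edgeFinset.card →
    QQ G (2 * ((suppF G).card + 2)) := by
  intro m
  induction m with
  | zero => intro G instG hm hts; omega
  | succ m ih =>
    intro G instG hm hts
    by_cases hle : G.edgeFinset.card ≤ m
    · exact ih G instG hle hts
    · have hEm : G.edgeFinset.card = m + 1 := by omega
      by_cases hbig : (suppF G).card + 3 ≤ G.edgeFinset.card
      · obtain ⟨e, he⟩ := Finset.card_pos.mp (by omega : 0 < G.edgeFinset.card)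
        have hE1 : (Gdel G {e}).edgeFinset = G.edgeFinset \ {e} := edgeFinset_Gdel G _
        have hc1 : (Gdel G {e}).edgeFinset.card = G.edgeFinset.card - 1 := by
          rw [hE1, Finset.card_sdiff_of_subset (Finset.singleton_subset_iff.mpr he), Finset.card_singleton]
        have hs1c := Finset.card_le_card (suppF_mono (Gdel_le G ({e} : Finset (Sym2 V))))
        have hq := ih (Gdel G {e}) inferInstance (by omega) (by omega)
        exact QQ_mono (by omega) (QQ_of_le (Gdel_le G _) hq)
      · have hEt : G.edgeFinset.card = (suppF G).card + 2 := by omega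
        by_cases h1 : ∃ w ∈ suppF G, G.degree w = 1
        · obtain ⟨w, hwsupp, hw1⟩ := h1
          obtain ⟨u, hu⟩ := Finset.card_eq_one.mp
            (by rwa [← G.card_neighborFinset_eq_degree] at hw1)
          have hadj : G.Adj w u := by
            rw [← mem_neighborFinset, hu]; exact Finset.mem_singleton_self u
          have husu : u ∈ suppF G := mem_suppF.mpr ⟨w, hadj.symm⟩
          have ht2 : 2 ≤ (suppF G).card := by
            rw [← Finset.card_pair hadj.ne]
            apply Finset.card_le_card
            intro z hz
            rcases Finset.mem_insert.mp hz with rfl | hz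
            · exact hwsupp
            · rw [Finset.mem_singleton] at hz; subst hz; exact husu
          have hE1 : (Gdel G {s(w, u)}).edgeFinset = G.edgeFinset \ {s(w, u)} :=
            edgeFinset_Gdel G _
          have hmem : s(w, u) ∈ G.edgeFinset := by rwa [mem_edgeFinset, SimpleGraph.mem_edgeSet]
          have hc1 : (Gdel G {s(w, u)}).edgeFinset.card = G.edgeFinset.card - 1 := by
            rw [hE1, Finset.card_sdiff_of_subset (Finset.singleton_subset_iff.mpr hmem),
              Finset.card_singleton]
          have hsupp1 : suppF (Gdel G {s(w, u)}) ⊆ suppF G \ {w} := by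
            intro z hz
            obtain ⟨y, hy⟩ := mem_suppF.mp hz
            rw [Finset.mem_sdiff, Finset.mem_singleton]
            refine ⟨mem_suppF.mpr ⟨y, hy.1⟩, ?_⟩
            rintro rfl
            have hyn : y ∈ G.neighborFinset z := by rw [mem_neighborFinset]; exact hy.1
            rw [hu, Finset.mem_singleton] at hyn
            subst hyn
            exact hy.2 (Finset.mem_singleton_self _)
          have hsc1 : (suppF (Gdel G {s(w, u)})).card ≤ (suppF G).card - 1 := by
            have h := Finset.card_le_card hsupp1
            rwa [Finset.card_sdiff_of_subset (Finset.singleton_subset_iff.mpr hwsupp),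
              Finset.card_singleton] at h
          have hq := ih (Gdel G {s(w, u)}) inferInstance (by omega) (by omega)
          exact QQ_mono (by omega) (QQ_of_le (Gdel_le G _) hq)
        · by_cases h2 : ∃ v, G.degree v = 2
          · obtain ⟨v, hv2⟩ := h2
            obtain ⟨a, b, hab, hnbr⟩ := Finset.card_eq_two.mp
              (by rwa [← G.card_neighborFinset_eq_degree] at hv2)
            have hva : G.Adj v a := by rw [← mem_neighborFinset, hnbr]; simp
            have hvb : G.Adj v b := by rw [← mem_neighborFinset, hnbr]; simp
            have hvsupp : v ∈ suppF G := mem_suppF.mpr ⟨a, hva⟩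
            have hasupp : a ∈ suppF G := mem_suppF.mpr ⟨v, hva.symm⟩
            have ht2 : 2 ≤ (suppF G).card := by
              rw [← Finset.card_pair hva.ne]
              apply Finset.card_le_card
              intro z hz
              rcases Finset.mem_insert.mp hz with rfl | hz
              · exact hvsupp
              · rw [Finset.mem_singleton] at hz; subst hz; exact hasupp
            obtain ⟨d1, d2, d3⟩ := hVAB_distinct hva hvb hab
            by_cases hadjab : G.Adj a b
            · -- triangle plus a disjoint cycle
              have hEH : (Gdel G {s(v, a), s(v, b), s(a, b)}).edgeFinset
                  = G.edgeFinset \ {s(v, a), s(v, b), s(a, b)} := edgeFinset_Gdel G _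
              have hsub3 : ({s(v, a), s(v, b), s(a, b)} : Finset (Sym2 V)) ⊆ G.edgeFinset := by
                intro f hf
                simp only [Finset.mem_insert, Finset.mem_singleton] at hf
                rcases hf with rfl | rfl | rfl <;> rw [mem_edgeFinset, SimpleGraph.mem_edgeSet] <;>
                  assumption
              have hcard3 : ({s(v, a), s(v, b), s(a, b)} : Finset (Sym2 V)).card = 3 := by
                rw [Finset.card_insert_of_notMem, Finset.card_insert_of_notMem,
                  Finset.card_singleton]
                · simp only [Finset.mem_singleton]; exact d3
                · simp only [Finset.mem_insert, Finset.mem_singleton]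
                  push_neg
                  exact ⟨d1, d2⟩
              have hcH : (Gdel G {s(v, a), s(v, b), s(a, b)}).edgeFinset.card
                  = (suppF G).card - 1 := by
                rw [hEH, Finset.card_sdiff_of_subset hsub3, hcard3]
                omega
              have hsuppH : suppF (Gdel G {s(v, a), s(v, b), s(a, b)}) ⊆ suppF G \ {v} := by
                intro z hz
                obtain ⟨y, hy⟩ := mem_suppF.mp hz
                obtain ⟨hy1, hy2⟩ := hy
                rw [Finset.mem_sdiff, Finset.mem_singleton]
                refine ⟨mem_suppF.mpr ⟨y, hy1⟩, ?_⟩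
                rintro rfl
                have hyn := (mem_neighborFinset G _ y).mpr hy1
                rw [hnbr] at hyn
                apply hy2
                simp only [Finset.mem_insert, Finset.mem_singleton]
                rcases Finset.mem_insert.mp hyn with rfl | hyn
                · exact Or.inl rfl
                · rw [Finset.mem_singleton] at hyn
                  subst hyn
                  exact Or.inr (Or.inl rfl)
              have hscH : (suppF (Gdel G {s(v, a), s(v, b), s(a, b)})).card
                  ≤ (suppF G).card - 1 := by
                have h := Finset.card_le_card hsuppH
                rwa [Finset.card_sdiff_of_subset (Finset.singleton_subset_iff.mpr hvsupp),
                  Finset.card_singleton] at h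
              obtain ⟨z0, D, hD⟩ := exists_cycle_of_card
                (Gdel G {s(v, a), s(v, b), s(a, b)}).edgeFinset.card
                (Gdel G {s(v, a), s(v, b), s(a, b)}) inferInstance le_rfl (by omega) (by omega)
              have hDsupp : ∀ s ∈ D.support, s ∈ suppF (Gdel G {s(v, a), s(v, b), s(a, b)}) :=
                fun s hs => mem_suppF.mpr (cycle_support_adj hD hs)
              have hDlen : D.length ≤ (suppF G).card - 1 :=
                le_trans (cycle_length_le hD hDsupp) hscH
              have htransD : ∀ f ∈ D.edges, f ∈ G.edgeSet := fun f hf =>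
                mem_edgeSet_of_mem_edgeSet_Gdel (D.edges_subset_edgeSet hf)
              have hT := triangle_isCycle hva hadjab hvb.symm
              have hTe := triangle_edges hva hadjab hvb.symm
              have hdisj : ∀ f ∈ D.edges, f ∉ (Walk.cons hva (Walk.cons hadjab
                  (Walk.cons hvb.symm Walk.nil)) : G.Walk v v).edges := by
                intro f hf hfT
                have hnot := not_mem_of_mem_edgeSet_Gdel (D.edges_subset_edgeSet hf)
                apply hnot
                rw [hTe] at hfT
                simp only [List.mem_cons, List.not_mem_nil, or_false] at hfT
                simp only [Finset.mem_insert, Finset.mem_singleton]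
                rcases hfT with rfl | rfl | rfl
                · exact Or.inl rfl
                · exact Or.inr (Or.inr rfl)
                · exact Or.inr (Or.inl Sym2.eq_swap)
              refine ⟨v, v, z0, z0, Walk.cons hva (Walk.cons hadjab (Walk.cons hvb.symm Walk.nil)),
                Walk.cons hva (Walk.cons hadjab (Walk.cons hvb.symm Walk.nil)),
                D.transfer G htransD, D.transfer G htransD,
                hT, hT, hD.transfer _, hD.transfer _, ?_, ?_⟩
              · intro f
                rw [cnt_transfer]
                by_cases hfD : f ∈ D.edges
                · have hfT := hdisj f hfD
                  unfold cnt
                  rw [if_neg hfT, if_pos hfD]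
                · unfold cnt
                  rw [if_neg hfD]
                  split_ifs <;> omega
              · simp only [Walk.length_cons, Walk.length_nil, Walk.length_transfer]
                omega
            · -- suppression
              have hcG' : (Gsw G v a b).edgeFinset.card = G.edgeFinset.card - 1 :=
                card_edgeFinset_Gsw hva hvb hab hadjab
              have hscG' : (suppF (Gsw G v a b)).card ≤ (suppF G).card - 1 := by
                have h := Finset.card_le_card (suppF_Gsw hva hvb hab hnbr)
                rwa [Finset.card_sdiff_of_subset (Finset.singleton_subset_iff.mpr hvsupp),
                  Finset.card_singleton] at h
              obtain ⟨w1, w2, w3, w4, p1, p2, p3, p4, hc1, hc2, hc3, hc4, hcnt, hlen⟩ :=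
                ih (Gsw G v a b) inferInstance (by omega) (by omega)
              have hedges := Gsw_edge_to_G hva hvb hab
              have hiso := Gsw_isolated hva hvb hab hnbr
              obtain ⟨z1, q1, hq1c, hq1l, hq1e⟩ := lift_one hva.symm hvb hab hedges hiso p1 hc1
              obtain ⟨z2, q2, hq2c, hq2l, hq2e⟩ := lift_one hva.symm hvb hab hedges hiso p2 hc2
              obtain ⟨z3, q3, hq3c, hq3l, hq3e⟩ := lift_one hva.symm hvb hab hedges hiso p3 hc3
              obtain ⟨z4, q4, hq4c, hq4l, hq4e⟩ := lift_one hva.symm hvb hab hedges hiso p4 hc4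
              refine ⟨z1, z2, z3, z4, q1, q2, q3, q4, hq1c, hq2c, hq3c, hq4c, ?_, ?_⟩
              · intro f
                have hnoav : ∀ {zz : V} (p : (Gsw G v a b).Walk zz zz), s(a, v) ∉ p.edges := by
                  intro zz p hmem
                  have h := p.edges_subset_edgeSet hmem
                  rw [SimpleGraph.mem_edgeSet] at h
                  exact hiso a h.symm
                have hnovb : ∀ {zz : V} (p : (Gsw G v a b).Walk zz zz), s(v, b) ∉ p.edges := by
                  intro zz p hmem
                  have h := p.edges_subset_edgeSet hmem
                  rw [SimpleGraph.mem_edgeSet] at h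
                  exact hiso b h
                by_cases hfa : f = s(a, v)
                · subst hfa
                  have hb1 : cnt s(a, v) q1 ≤ cnt s(a, b) p1 := cnt_mono2 (fun h => by
                    rcases (hq1e _).mp h with ⟨h1, -⟩ | ⟨-, h2⟩
                    · exact absurd h1 (hnoav p1)
                    · exact h2)
                  have hb2 : cnt s(a, v) q2 ≤ cnt s(a, b) p2 := cnt_mono2 (fun h => by
                    rcases (hq2e _).mp h with ⟨h1, -⟩ | ⟨-, h2⟩
                    · exact absurd h1 (hnoav p2)
                    · exact h2)
                  have hb3 : cnt s(a, v) q3 ≤ cnt s(a, b) p3 := cnt_mono2 (fun h => by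
                    rcases (hq3e _).mp h with ⟨h1, -⟩ | ⟨-, h2⟩
                    · exact absurd h1 (hnoav p3)
                    · exact h2)
                  have hb4 : cnt s(a, v) q4 ≤ cnt s(a, b) p4 := cnt_mono2 (fun h => by
                    rcases (hq4e _).mp h with ⟨h1, -⟩ | ⟨-, h2⟩
                    · exact absurd h1 (hnoav p4)
                    · exact h2)
                  have := hcnt s(a, b)
                  omega
                · by_cases hfb : f = s(v, b)
                  · subst hfb
                    have hb1 : cnt s(v, b) q1 ≤ cnt s(a, b) p1 := cnt_mono2 (fun h => by
                      rcases (hq1e _).mp h with ⟨h1, -⟩ | ⟨-, h2⟩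
                      · exact absurd h1 (hnovb p1)
                      · exact h2)
                    have hb2 : cnt s(v, b) q2 ≤ cnt s(a, b) p2 := cnt_mono2 (fun h => by
                      rcases (hq2e _).mp h with ⟨h1, -⟩ | ⟨-, h2⟩
                      · exact absurd h1 (hnovb p2)
                      · exact h2)
                    have hb3 : cnt s(v, b) q3 ≤ cnt s(a, b) p3 := cnt_mono2 (fun h => by
                      rcases (hq3e _).mp h with ⟨h1, -⟩ | ⟨-, h2⟩
                      · exact absurd h1 (hnovb p3)
                      · exact h2)
                    have hb4 : cnt s(v, b) q4 ≤ cnt s(a, b) p4 := cnt_mono2 (fun h => by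
                      rcases (hq4e _).mp h with ⟨h1, -⟩ | ⟨-, h2⟩
                      · exact absurd h1 (hnovb p4)
                      · exact h2)
                    have := hcnt s(a, b)
                    omega
                  · have hb1 : cnt f q1 ≤ cnt f p1 := cnt_mono2 (fun h => by
                      rcases (hq1e f).mp h with ⟨h1, -⟩ | ⟨hor, -⟩
                      · exact h1
                      · rcases hor with rfl | rfl
                        · exact absurd rfl hfa
                        · exact absurd rfl hfb)
                    have hb2 : cnt f q2 ≤ cnt f p2 := cnt_mono2 (fun h => by
                      rcases (hq2e f).mp h with ⟨h1, -⟩ | ⟨hor, -⟩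
                      · exact h1
                      · rcases hor with rfl | rfl
                        · exact absurd rfl hfa
                        · exact absurd rfl hfb)
                    have hb3 : cnt f q3 ≤ cnt f p3 := cnt_mono2 (fun h => by
                      rcases (hq3e f).mp h with ⟨h1, -⟩ | ⟨hor, -⟩
                      · exact h1
                      · rcases hor with rfl | rfl
                        · exact absurd rfl hfa
                        · exact absurd rfl hfb)
                    have hb4 : cnt f q4 ≤ cnt f p4 := cnt_mono2 (fun h => by
                      rcases (hq4e f).mp h with ⟨h1, -⟩ | ⟨hor, -⟩
                      · exact h1
                      · rcases hor with rfl | rfl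
                        · exact absurd rfl hfa
                        · exact absurd rfl hfb)
                    have := hcnt f
                    omega
              · have habcnt := hcnt s(a, b)
                have hlb1 := cnt_le_one (e := s(a, b)) p1
                have hlb2 := cnt_le_one (e := s(a, b)) p2
                have hlb3 := cnt_le_one (e := s(a, b)) p3
                have hlb4 := cnt_le_one (e := s(a, b)) p4
                omega
          · push_neg at h1 h2
            have hdeg3 : ∀ z ∈ suppF G, 3 ≤ G.degree z := by
              intro z hzm
              have hpos : 0 < G.degree z := by
                rw [← card_neighborFinset_eq_degree]
                obtain ⟨y, hy⟩ := mem_suppF.mp hzm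
                exact Finset.card_pos.mpr ⟨y, (mem_neighborFinset G z y).mpr hy⟩
              have ha := h1 z hzm
              have hb := h2 z
              omega
            exact base_K4 hEt hdeg3

end ExcessTwo

set_option maxHeartbeats 2000000 in
/-- Every n-vertex graph with at least n+2 edges contains a cycle of length
at most n/2 + 1. -/
theorem excess_two_short_cycle {V : Type} [Fintype V] [DecidableEq V]
    (G : SimpleGraph V) [DecidableRel G.Adj]
    (h : Fintype.card V + 2 ≤ G.edgeFinset.card) :
    ∃ (v : V) (p : G.Walk v v), p.IsCycle ∧
      (p.length : ℚ) ≤ (Fintype.card V : ℚ) / 2 + 1 := by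
  have htle : (ExcessTwo.suppF G).card ≤ Fintype.card V := by
    calc (ExcessTwo.suppF G).card ≤ Finset.univ.card := Finset.card_le_card (Finset.subset_univ _)
    _ = Fintype.card V := Finset.card_univ
  have hq := ExcessTwo.key G.edgeFinset.card G inferInstance (le_refl G.edgeFinset.card) (by omega)
  obtain ⟨w1, w2, w3, w4, p1, p2, p3, p4, h1, h2, h3, h4, -, hlen⟩ := hq
  have hone : 2 * p1.length ≤ Fintype.card V + 2 ∨ 2 * p2.length ≤ Fintype.card V + 2 ∨
      2 * p3.length ≤ Fintype.card V + 2 ∨ 2 * p4.length ≤ Fintype.card V + 2 := by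
    omega
  have hfin : ∀ (L : ℕ), 2 * L ≤ Fintype.card V + 2 →
      (L : ℚ) ≤ (Fintype.card V : ℚ) / 2 + 1 := by
    intro L hL
    have hc : (2 * L : ℚ) ≤ (Fintype.card V : ℚ) + 2 := by exact_mod_cast hL
    linarith
  rcases hone with hone | hone | hone | hone
  · exact ⟨w1, p1, h1, hfin _ hone⟩
  · exact ⟨w2, p2, h2, hfin _ hone⟩
  · exact ⟨w3, p3, h3, hfin _ hone⟩
  · exact ⟨w4, p4, h4, hfin _ hone⟩
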